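/- There exists a universal constant c > 0 such that for every n ≥ 2 the following holds. Let P_n denote the n-point path, i.e. the set {0, 1, ..., n−1} with metric d(i,j) = |i−j|. Let D be any finitely supported probability distribution over pairs (U, f), where (U, d_U) is a finite ultrametric space and f : P_n → U is non-contractive. Then there exists x ∈ P_n such that the expectation over D of |∇f(x)|_∞ = max_{y ≠ x} d_U(f(x),f(y))/|x−y| is at least c·(log n)². -/

import Mathlib

/-- `d` is a metric on `X`. -/
def IsMetric {X : Type*} (d : X → X → ℝ) : Prop :=
  (∀ x y, 0 ≤ d x y) ∧ (∀ x y, d x y = 0 ↔ x = y) ∧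
  (∀ x y, d x y = d y x) ∧ (∀ x y z, d x z ≤ d x y + d y z)

/-- `ρ` is an ultrametric. -/
def IsUltrametric {X : Type*} (ρ : X → X → ℝ) : Prop :=
  ∀ u v w, ρ u v ≤ max (ρ u w) (ρ w v)

open Finset

namespace PathUltra

def HQ (n : ℕ) (G : ℕ → ℝ) (q : ℕ → ℕ → ℕ) : Prop :=
  ∀ k a, a + 2^k + 2 ≤ n → a < q k a ∧ q k a ≤ a + 2^k + 1 ∧
    ∀ x h, x < n → q k a ≤ x + h → x ≤ q k a + h → (2:ℝ)^k / (h+1) ≤ G x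

def Wd (σ i : ℕ) : ℕ := 2 ^ (σ + 4*i + 2)
def Md (n σ i : ℕ) : ℕ := n / Wd σ i
def ctr (q : ℕ → ℕ → ℕ) (σ i j : ℕ) : ℕ := q (σ + 4*i) (j * Wd σ i)
def rad (i : ℕ) : ℕ := 2 ^ (4*i)

def NearD (q : ℕ → ℕ → ℕ) (σ i j i' j' : ℕ) : Prop :=
  ctr q σ i' j' ≤ ctr q σ i j + 2 * rad i' ∧ ctr q σ i j ≤ ctr q σ i' j' + 2 * rad i'

instance (q : ℕ → ℕ → ℕ) (σ i j i' j' : ℕ) : Decidable (NearD q σ i j i' j') := by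
  unfold NearD; exact instDecidableAnd

def Vg (n : ℕ) (q : ℕ → ℕ → ℕ) (σ J i : ℕ) : Finset ℕ :=
  @Finset.filter _
    (fun j => ∀ i' ∈ Ioo i J, ∀ j' ∈ Ico 1 (Md n σ i'), ¬ NearD q σ i j i' j')
    (fun j => by infer_instance) (Ico 1 (Md n σ i))

lemma mem_Vg {n σ i j J : ℕ} {q : ℕ → ℕ → ℕ} : j ∈ Vg n q σ J i ↔ j ∈ Ico 1 (Md n σ i) ∧
    ∀ i'' ∈ Ioo i J, ∀ j'' ∈ Ico 1 (Md n σ i''), ¬ NearD q σ i j i'' j'' := by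
  rw [Vg, mem_filter]

def Nd (n : ℕ) (q : ℕ → ℕ → ℕ) (σ J i : ℕ) : Finset ℕ :=
  (Vg n q σ J i).biUnion (fun j => Icc (ctr q σ i j - rad i) (ctr q σ i j + rad i))

variable {n σ i i' j j' J : ℕ} {G : ℕ → ℝ} {q : ℕ → ℕ → ℕ}

lemma one_le_pow (e : ℕ) : 1 ≤ 2^e := Nat.one_le_two_pow

lemma Wd_eq : Wd σ i = 4 * 2^(σ + 4*i) := by unfold Wd; ring

lemma window (hj : j < Md n σ i) : j * Wd σ i + 2^(σ+4*i) + 2 ≤ n := by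
  have hW : 0 < Wd σ i := Nat.pow_pos (by norm_num)
  have h1 : (j+1) * Wd σ i ≤ n := (Nat.le_div_iff_mul_le hW).mp hj
  have h2 := @Wd_eq σ i
  have h3 := one_le_pow (σ+4*i)
  rw [add_one_mul] at h1
  omega

lemma ctr_spec (hHQ : HQ n G q) (hj : j < Md n σ i) :
    j * Wd σ i < ctr q σ i j ∧ ctr q σ i j ≤ j * Wd σ i + 2^(σ+4*i) + 1 ∧
    ∀ x h, x < n → ctr q σ i j ≤ x + h → x ≤ ctr q σ i j + h →
      (2:ℝ)^(σ+4*i) / (h+1) ≤ G x :=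
  hHQ _ _ (window hj)

lemma rad_le_pow : rad i ≤ 2^(σ+4*i) :=
  Nat.pow_le_pow_right (by norm_num) (by omega)

lemma ball_lt_n (hHQ : HQ n G q) (hj : j < Md n σ i) : ctr q σ i j + rad i < n := by
  obtain ⟨h1, h2, _⟩ := ctr_spec hHQ hj
  have hW : 0 < Wd σ i := Nat.pow_pos (by norm_num)
  have h3 : (j+1) * Wd σ i ≤ n := (Nat.le_div_iff_mul_le hW).mp hj
  have h4 := @Wd_eq σ i
  have h5 : rad i ≤ 2^(σ+4*i) := rad_le_pow
  have h6 := one_le_pow (σ+4*i)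
  rw [add_one_mul] at h3
  omega

lemma rad_le_ctr (hHQ : HQ n G q) (hj1 : 1 ≤ j) (hj : j < Md n σ i) :
    rad i ≤ ctr q σ i j := by
  obtain ⟨h1, _, _⟩ := ctr_spec hHQ hj
  have h4 : rad i ≤ Wd σ i := by
    unfold rad Wd; exact Nat.pow_le_pow_right (by norm_num) (by omega)
  have : Wd σ i ≤ j * Wd σ i := Nat.le_mul_of_pos_left _ hj1
  omega

lemma ball_card (hHQ : HQ n G q) (hj1 : 1 ≤ j) (hj : j < Md n σ i) :
    (Icc (ctr q σ i j - rad i) (ctr q σ i j + rad i)).card = 2 * rad i + 1 := by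
  have := rad_le_ctr hHQ hj1 hj
  rw [Nat.card_Icc]
  omega

lemma balls_disj (hHQ : HQ n G q) (hj : j < Md n σ i) (hj' : j' < Md n σ i)
    (hne : j < j') :
    Disjoint (Icc (ctr q σ i j - rad i) (ctr q σ i j + rad i))
      (Icc (ctr q σ i j' - rad i) (ctr q σ i j' + rad i)) := by
  obtain ⟨h1, h2, _⟩ := ctr_spec hHQ hj
  obtain ⟨h1', h2', _⟩ := ctr_spec hHQ hj'
  have hmul : (j+1) * Wd σ i ≤ j' * Wd σ i := Nat.mul_le_mul_right _ (by omega)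
  have h4 := @Wd_eq σ i
  have h5 : rad i ≤ 2^(σ+4*i) := rad_le_pow
  have h6 := one_le_pow (σ+4*i)
  have key : ctr q σ i j + rad i < ctr q σ i j' - rad i := by
    rw [add_one_mul] at hmul
    omega
  simp only [disjoint_left, mem_Icc]
  intro x hx hx'
  omega

lemma mem_ball_near (hHQ : HQ n G q) (hii' : i < i')
    (hj : j < Md n σ i) (hj' : j' < Md n σ i') {x : ℕ}
    (hx : x ∈ Icc (ctr q σ i j - rad i) (ctr q σ i j + rad i))
    (hx' : x ∈ Icc (ctr q σ i' j' - rad i') (ctr q σ i' j' + rad i')) :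
    NearD q σ i j i' j' := by
  simp only [mem_Icc] at hx hx'
  have hr : rad i ≤ rad i' := Nat.pow_le_pow_right (by norm_num) (by omega)
  constructor <;> omega

lemma Nd_disj (hHQ : HQ n G q) (hii' : i < i') (hi'J : i' < J) :
    Disjoint (Nd n q σ J i) (Nd n q σ J i') := by
  simp only [disjoint_left, Nd, mem_biUnion]
  rintro x ⟨j, hjV, hxj⟩ ⟨j', hj'V, hxj'⟩
  rw [mem_Vg] at hjV hj'V
  have hj1 := mem_Ico.mp hjV.1
  have hj'1 := mem_Ico.mp hj'V.1
  exact hjV.2 i' (mem_Ioo.mpr ⟨hii', hi'J⟩) j' hj'V.1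
    (mem_ball_near hHQ hii' hj1.2 hj'1.2 hxj hxj')


def loI (q : ℕ → ℕ → ℕ) (σ i i' j' : ℕ) : ℕ :=
  (ctr q σ i' j' - (2*rad i' + 2^(σ+4*i) + 1)) / Wd σ i
def hiI (q : ℕ → ℕ → ℕ) (σ i i' j' : ℕ) : ℕ :=
  (ctr q σ i' j' + 2*rad i') / Wd σ i

lemma kill_mem (hHQ : HQ n G q) (hj : j < Md n σ i)
    (hNear : NearD q σ i j i' j') :
    j ∈ Icc (loI q σ i i' j') (hiI q σ i i' j') := by
  obtain ⟨h1, h2, _⟩ := ctr_spec hHQ hj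
  obtain ⟨hN1, hN2⟩ := hNear
  have hW : 0 < Wd σ i := Nat.pow_pos (by norm_num)
  rw [mem_Icc]
  constructor
  · have hb : ctr q σ i' j' - (2*rad i' + 2^(σ+4*i) + 1) ≤ j * Wd σ i := by omega
    calc loI q σ i i' j' ≤ j * Wd σ i / Wd σ i := Nat.div_le_div_right hb
    _ = j := Nat.mul_div_cancel j hW
  · have ha : j * Wd σ i ≤ ctr q σ i' j' + 2*rad i' := by omega
    calc j = j * Wd σ i / Wd σ i := (Nat.mul_div_cancel j hW).symm
    _ ≤ hiI q σ i i' j' := Nat.div_le_div_right ha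

lemma icc_card_le :
    (Icc (loI q σ i i' j') (hiI q σ i i' j')).card ≤
      (4*rad i' + 2^(σ+4*i) + 1) / Wd σ i + 2 := by
  have hW : 0 < Wd σ i := Nat.pow_pos (by norm_num)
  have hab : ctr q σ i' j' + 2*rad i' ≤
      (ctr q σ i' j' - (2*rad i' + 2^(σ+4*i) + 1)) + (4*rad i' + 2^(σ+4*i) + 1) := by
    omega
  have h1 : (ctr q σ i' j' + 2*rad i') / Wd σ i ≤
      ((ctr q σ i' j' - (2*rad i' + 2^(σ+4*i) + 1)) + (4*rad i' + 2^(σ+4*i) + 1)) / Wd σ i :=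
    Nat.div_le_div_right hab
  have h2 : ((ctr q σ i' j' - (2*rad i' + 2^(σ+4*i) + 1)) + (4*rad i' + 2^(σ+4*i) + 1)) / Wd σ i
      ≤ (ctr q σ i' j' - (2*rad i' + 2^(σ+4*i) + 1)) / Wd σ i
        + (4*rad i' + 2^(σ+4*i) + 1) / Wd σ i + 1 := by
    rw [Nat.add_div hW]
    split_ifs <;> omega
  have hz1 := Nat.zero_le ((4*rad i' + 2^(σ+4*i) + 1) / Wd σ i)
  have hz2 := Nat.zero_le ((ctr q σ i' j' - (2*rad i' + 2^(σ+4*i) + 1)) / Wd σ i)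
  have hz3 := Nat.zero_le ((ctr q σ i' j' + 2*rad i') / Wd σ i)
  rw [Nat.card_Icc]
  unfold loI hiI
  omega

lemma kill_card (hHQ : HQ n G q) :
    Md n σ i - 1 ≤ (Vg n q σ J i).card +
      ∑ i' ∈ Ioo i J, (Md n σ i') * ((4*rad i' + 2^(σ+4*i) + 1) / Wd σ i + 2) := by
  classical
  set P : ℕ → Prop := fun j =>
    ∀ i' ∈ Ioo i J, ∀ j' ∈ Ico 1 (Md n σ i'), ¬ NearD q σ i j i' j' with hP
  have hVg : (Vg n q σ J i).card = ((Ico 1 (Md n σ i)).filter P).card := by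
    rw [Vg]
  have hsplit : ((Ico 1 (Md n σ i)).filter P).card
      + ((Ico 1 (Md n σ i)).filter (fun j => ¬ P j)).card = Md n σ i - 1 := by
    rw [Finset.card_filter_add_card_filter_not, Nat.card_Ico]
  have hsub : (Ico 1 (Md n σ i)).filter (fun j => ¬ P j) ⊆
      (Ioo i J).biUnion (fun i' => (Ico 1 (Md n σ i')).biUnion
        (fun j' => Icc (loI q σ i i' j') (hiI q σ i i' j'))) := by
    intro j hj
    rw [mem_filter] at hj
    obtain ⟨hj0, hj1⟩ := hj
    simp only [hP, not_forall] at hj1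
    obtain ⟨i', hi', j', hj', hN⟩ := hj1
    rw [mem_biUnion]
    refine ⟨i', hi', ?_⟩
    rw [mem_biUnion]
    refine ⟨j', hj', kill_mem hHQ (mem_Ico.mp hj0).2 (not_not.mp hN)⟩
  have hcard : ((Ico 1 (Md n σ i)).filter (fun j => ¬ P j)).card ≤
      ∑ i' ∈ Ioo i J, (Md n σ i') * ((4*rad i' + 2^(σ+4*i) + 1) / Wd σ i + 2) := by
    calc ((Ico 1 (Md n σ i)).filter (fun j => ¬ P j)).card
        ≤ ((Ioo i J).biUnion (fun i' => (Ico 1 (Md n σ i')).biUnion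
          (fun j' => Icc (loI q σ i i' j') (hiI q σ i i' j')))).card :=
          Finset.card_le_card hsub
      _ ≤ ∑ i' ∈ Ioo i J, ((Ico 1 (Md n σ i')).biUnion
          (fun j' => Icc (loI q σ i i' j') (hiI q σ i i' j'))).card :=
          Finset.card_biUnion_le
      _ ≤ ∑ i' ∈ Ioo i J, (Md n σ i') * ((4*rad i' + 2^(σ+4*i) + 1) / Wd σ i + 2) := by
          apply Finset.sum_le_sum
          intro i'' _
          calc ((Ico 1 (Md n σ i'')).biUnion
              (fun j' => Icc (loI q σ i i'' j') (hiI q σ i i'' j'))).card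
              ≤ ∑ j' ∈ Ico 1 (Md n σ i''), (Icc (loI q σ i i'' j') (hiI q σ i i'' j')).card :=
              Finset.card_biUnion_le
            _ ≤ ∑ j' ∈ Ico 1 (Md n σ i''), ((4*rad i'' + 2^(σ+4*i) + 1) / Wd σ i + 2) :=
              Finset.sum_le_sum (fun j'' _ => icc_card_le)
            _ = (Md n σ i'' - 1) * ((4*rad i'' + 2^(σ+4*i) + 1) / Wd σ i + 2) := by
              rw [Finset.sum_const, Nat.card_Ico, smul_eq_mul]
            _ ≤ (Md n σ i'') * ((4*rad i'' + 2^(σ+4*i) + 1) / Wd σ i + 2) :=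
              Nat.mul_le_mul_right _ (by omega)
  omega


lemma Md_def : Md n σ i = n / Wd σ i := rfl

lemma geo_sum_bound : ∑ i' ∈ Ioo i J, ((2:ℝ)⁻¹)^(i'-i-1) ≤ 2 := by
  have h1 : ∑ i' ∈ Ioo i J, ((2:ℝ)⁻¹)^(i'-i-1)
      = ∑ t ∈ (Ioo i J).image (fun i' => i' - i - 1), ((2:ℝ)⁻¹)^t := by
    rw [Finset.sum_image]
    intro x hx y hy hxy
    rw [Finset.mem_coe, mem_Ioo] at hx hy
    simp only at hxy
    omega
  rw [h1]
  calc ∑ t ∈ (Ioo i J).image (fun i' => i' - i - 1), ((2:ℝ)⁻¹)^t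
      ≤ ∑ t ∈ range J, ((2:ℝ)⁻¹)^t := by
        apply Finset.sum_le_sum_of_subset_of_nonneg
        · intro t ht
          rw [mem_image] at ht
          obtain ⟨i', hi', rfl⟩ := ht
          rw [mem_Ioo] at hi'
          rw [mem_range]
          omega
        · intro t _ _
          positivity
    _ ≤ 2 := by
        have := sum_geometric_two_le J
        simp only [one_div] at this
        exact this

set_option maxHeartbeats 1000000 in
lemma Vg_card_real (hHQ : HQ n G q) (hiJ : i < J)
    (hJσ : 8*J ≤ 2^σ) (hn32 : 32 * Wd σ i ≤ n) :
    (n : ℝ) / (Wd σ i : ℝ) / 2 ≤ ((Vg n q σ J i).card : ℝ) := by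
  have hWpos : 0 < Wd σ i := Nat.pow_pos (by norm_num)
  have hWR : (0:ℝ) < (Wd σ i : ℝ) := by exact_mod_cast hWpos
  have hnpos : 0 < n := by
    have : 0 < 32 * Wd σ i := by omega
    omega
  have hnR : (0:ℝ) < (n:ℝ) := by exact_mod_cast hnpos
  set X := (n : ℝ) / (Wd σ i : ℝ) with hX
  have hXpos : 0 < X := by positivity
  have hX32 : 32 ≤ X := by
    rw [hX, le_div_iff₀ hWR]
    exact_mod_cast hn32
  have hMd32 : 32 ≤ Md n σ i := by
    rw [Md_def]
    exact (Nat.le_div_iff_mul_le hWpos).mpr hn32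
  -- lower bound on Md
  have hMdlow : X - 1 ≤ (Md n σ i : ℝ) := by
    have h1 := Nat.div_add_mod n (Wd σ i)
    have h2 := Nat.mod_lt n hWpos
    have h3 : n < Wd σ i * (n / Wd σ i) + Wd σ i := by omega
    have h4 : (n:ℝ) < (Wd σ i : ℝ) * ((Md n σ i : ℕ) : ℝ) + (Wd σ i : ℝ) := by
      rw [Md_def]
      exact_mod_cast h3
    rw [hX, sub_le_iff_le_add, div_le_iff₀ hWR]
    nlinarith
  -- the per-term bound
  have key : ∀ i' ∈ Ioo i J,
      ((Md n σ i' * ((4*rad i' + 2^(σ+4*i) + 1) / Wd σ i + 2) : ℕ) : ℝ)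
        ≤ X / (2:ℝ)^σ + (5/32) * X * ((2:ℝ)⁻¹)^(i'-i-1) := by
    intro i' hi'
    rw [mem_Ioo] at hi'
    have idW : Wd σ i' = Wd σ i * 2^(4*(i'-i)) := by
      unfold Wd; rw [← pow_add]; congr 1; omega
    have idr : rad i' = rad i * 2^(4*(i'-i)) := by
      unfold rad; rw [← pow_add]; congr 1; omega
    have idk : rad i * 2^σ = 2^(σ+4*i) := by
      unfold rad; rw [← pow_add]; congr 1; omega
    have idp : (16 : ℕ) * 2^(i'-i-1) ≤ 2^(4*(i'-i)) := by
      have h16 : (16:ℕ)*2^(i'-i-1) = 2^(4 + (i'-i-1)) := by rw [pow_add]; norm_num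
      rw [h16]
      exact Nat.pow_le_pow_right (by norm_num) (by omega)
    -- real abbreviations
    have hK : (0:ℝ) < (2:ℝ)^(σ+4*i) := by positivity
    have hR : (0:ℝ) < (2:ℝ)^(4*(i'-i)) := by positivity
    have hS : (0:ℝ) < (2:ℝ)^σ := by positivity
    have hT : (0:ℝ) < ((2:ℝ)⁻¹)^(i'-i-1) := by positivity
    have hWe : (Wd σ i : ℝ) = 4 * (2:ℝ)^(σ+4*i) := by
      have := @Wd_eq σ i
      exact_mod_cast this
    have hW'e : (Wd σ i' : ℝ) = (Wd σ i : ℝ) * (2:ℝ)^(4*(i'-i)) := by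
      exact_mod_cast idW
    have hr'e : (rad i' : ℝ) = (rad i : ℝ) * (2:ℝ)^(4*(i'-i)) := by
      exact_mod_cast idr
    have hke : (rad i : ℝ) * (2:ℝ)^σ = (2:ℝ)^(σ+4*i) := by
      exact_mod_cast idk
    have hpe : (16:ℝ) * (2:ℝ)^(i'-i-1) ≤ (2:ℝ)^(4*(i'-i)) := by
      exact_mod_cast idp
    have hTe : ((2:ℝ)⁻¹)^(i'-i-1) = 1 / (2:ℝ)^(i'-i-1) := by
      rw [inv_pow, one_div]
    have hrpos : (0:ℝ) < (rad i : ℝ) := by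
      have : 0 < rad i := Nat.pow_pos (by norm_num)
      exact_mod_cast this
    -- A bound
    have hA : (Md n σ i' : ℝ) ≤ (n:ℝ) / (Wd σ i' : ℝ) := Nat.cast_div_le
    have hA0 : (0:ℝ) ≤ (Md n σ i' : ℝ) := Nat.cast_nonneg _
    -- B bound
    have hK1 : (1:ℝ) ≤ (2:ℝ)^(σ+4*i) := one_le_pow₀ (by norm_num)
    have hB : (((4*rad i' + 2^(σ+4*i) + 1) / Wd σ i + 2 : ℕ) : ℝ)
        ≤ (rad i' : ℝ)/(2:ℝ)^(σ+4*i) + 5/2 := by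
      push_cast
      have hnum : ((4*rad i' + 2^(σ+4*i) + 1 : ℕ) : ℝ) ≤ 4*(rad i':ℝ) + 2*(2:ℝ)^(σ+4*i) := by
        push_cast
        linarith
      have hc : ((4*rad i' + 2^(σ+4*i) + 1 : ℕ) : ℝ) / ((Wd σ i : ℕ) : ℝ)
          ≤ (rad i' : ℝ)/(2:ℝ)^(σ+4*i) + 1/2 := by
        rw [hWe]
        calc ((4*rad i' + 2^(σ+4*i) + 1 : ℕ) : ℝ) / (4 * (2:ℝ)^(σ+4*i))
            ≤ (4*(rad i':ℝ) + 2*(2:ℝ)^(σ+4*i)) / (4 * (2:ℝ)^(σ+4*i)) := by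
              apply div_le_div_of_nonneg_right hnum ?_
              positivity
          _ = (rad i' : ℝ)/(2:ℝ)^(σ+4*i) + 1/2 := by
              field_simp
              ring
      have hdd : (((4*rad i' + 2^(σ+4*i) + 1) / Wd σ i : ℕ) : ℝ)
          ≤ ((4*rad i' + 2^(σ+4*i) + 1 : ℕ) : ℝ) / ((Wd σ i : ℕ) : ℝ) := Nat.cast_div_le
      push_cast at hdd hc
      linarith
    have hB0 : (0:ℝ) ≤ (rad i' : ℝ)/(2:ℝ)^(σ+4*i) + 5/2 := by positivity
    -- combine product
    have hprod : ((Md n σ i' * ((4*rad i' + 2^(σ+4*i) + 1) / Wd σ i + 2) : ℕ) : ℝ)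
        ≤ ((n:ℝ) / (Wd σ i' : ℝ)) * ((rad i' : ℝ)/(2:ℝ)^(σ+4*i) + 5/2) := by
      push_cast
      push_cast at hB
      exact mul_le_mul hA hB (by positivity) (by positivity)
    -- evaluate the RHS
    have hWr : (Wd σ i : ℝ) = 4 * ((rad i:ℝ) * (2:ℝ)^σ) := by rw [hke]; exact hWe
    have e1 : ((n:ℝ) / (Wd σ i' : ℝ)) * ((rad i' : ℝ)/(2:ℝ)^(σ+4*i)) = X / (2:ℝ)^σ := by
      rw [hW'e, hr'e, ← hke, hX, hWr]
      field_simp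
    have e2 : ((n:ℝ) / (Wd σ i' : ℝ)) * (5/2:ℝ) ≤ (5/32) * X * ((2:ℝ)⁻¹)^(i'-i-1) := by
      have h5 : (n:ℝ) / (Wd σ i' : ℝ) ≤ (n:ℝ) / ((Wd σ i : ℝ) * (16 * (2:ℝ)^(i'-i-1))) := by
        rw [hW'e]
        apply div_le_div_of_nonneg_left (le_of_lt hnR) (by positivity)
        apply mul_le_mul_of_nonneg_left hpe (le_of_lt hWR)
      have h2t : (0:ℝ) < (2:ℝ)^(i'-i-1) := by positivity
      have h6 : (n:ℝ) / ((Wd σ i : ℝ) * (16 * (2:ℝ)^(i'-i-1)))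
          = (1/16) * X * ((2:ℝ)⁻¹)^(i'-i-1) := by
        rw [hTe, hX]
        field_simp
      rw [h6] at h5
      nlinarith [hT, hXpos, h5]
    calc ((Md n σ i' * ((4*rad i' + 2^(σ+4*i) + 1) / Wd σ i + 2) : ℕ) : ℝ)
        ≤ ((n:ℝ) / (Wd σ i' : ℝ)) * ((rad i' : ℝ)/(2:ℝ)^(σ+4*i) + 5/2) := hprod
      _ = ((n:ℝ) / (Wd σ i' : ℝ)) * ((rad i' : ℝ)/(2:ℝ)^(σ+4*i))
            + ((n:ℝ) / (Wd σ i' : ℝ)) * (5/2) := by ring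
      _ ≤ X / (2:ℝ)^σ + (5/32) * X * ((2:ℝ)⁻¹)^(i'-i-1) := by
          rw [e1]
          linarith [e2]
  -- sum bound
  have hsum : ∑ i' ∈ Ioo i J,
      ((Md n σ i' * ((4*rad i' + 2^(σ+4*i) + 1) / Wd σ i + 2) : ℕ) : ℝ)
      ≤ (7/16) * X := by
    have hS : (0:ℝ) < (2:ℝ)^σ := by positivity
    calc ∑ i' ∈ Ioo i J,
        ((Md n σ i' * ((4*rad i' + 2^(σ+4*i) + 1) / Wd σ i + 2) : ℕ) : ℝ)
        ≤ ∑ i' ∈ Ioo i J, (X / (2:ℝ)^σ + (5/32) * X * ((2:ℝ)⁻¹)^(i'-i-1)) :=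
          Finset.sum_le_sum key
      _ = (Ioo i J).card * (X / (2:ℝ)^σ)
            + (5/32) * X * ∑ i' ∈ Ioo i J, ((2:ℝ)⁻¹)^(i'-i-1) := by
          rw [Finset.sum_add_distrib, Finset.sum_const, nsmul_eq_mul, Finset.mul_sum]
      _ ≤ (J:ℝ) * (X / (2:ℝ)^σ) + (5/32) * X * 2 := by
          have hc : ((Ioo i J).card : ℝ) ≤ (J:ℝ) := by
            rw [Nat.card_Ioo]
            have : J - i - 1 ≤ J := by omega
            exact_mod_cast this
          have hg := @geo_sum_bound i J
          have h1 : ((Ioo i J).card : ℝ) * (X / (2:ℝ)^σ) ≤ (J:ℝ) * (X / (2:ℝ)^σ) := by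
            apply mul_le_mul_of_nonneg_right hc (by positivity)
          have h2 : (5/32) * X * ∑ i' ∈ Ioo i J, ((2:ℝ)⁻¹)^(i'-i-1) ≤ (5/32) * X * 2 := by
            apply mul_le_mul_of_nonneg_left hg (by positivity)
          linarith
      _ ≤ (7/16) * X := by
          have hJX : (J:ℝ) * (X / (2:ℝ)^σ) ≤ X / 8 := by
            have h2σ : (8:ℝ) * (J:ℝ) ≤ (2:ℝ)^σ := by exact_mod_cast hJσ
            have hJ0 : (0:ℝ) ≤ (J:ℝ) := Nat.cast_nonneg _
            calc (J:ℝ) * (X / (2:ℝ)^σ) = X * ((J:ℝ)/(2:ℝ)^σ) := by ring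
              _ ≤ X * (1/8) := by
                  apply mul_le_mul_of_nonneg_left ?_ (le_of_lt hXpos)
                  rw [div_le_div_iff₀ hS (by norm_num : (0:ℝ) < 8)]
                  linarith
              _ = X / 8 := by ring
          nlinarith
  -- put together
  have hkc := @kill_card n σ i J G q hHQ
  have hkcR : (Md n σ i : ℝ) - 1 ≤ ((Vg n q σ J i).card : ℝ)
      + ∑ i' ∈ Ioo i J,
        ((Md n σ i' * ((4*rad i' + 2^(σ+4*i) + 1) / Wd σ i + 2) : ℕ) : ℝ) := by
    have h1 : ((Md n σ i - 1 : ℕ) : ℝ) = (Md n σ i : ℝ) - 1 := by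
      have : 1 ≤ Md n σ i := by omega
      push_cast [Nat.cast_sub this]
      ring
    rw [← h1]
    exact_mod_cast hkc
  linarith [hkcR, hsum, hMdlow, hX32]


lemma Wd_rad : Wd σ i = rad i * 2^(σ+2) := by
  unfold Wd rad; rw [← pow_add]; congr 1; omega

lemma pow_sigma_rad : (2:ℕ)^(σ+4*i) = 2^σ * rad i := by
  unfold rad; rw [← pow_add]

set_option maxHeartbeats 1000000 in
lemma Nd_card (hHQ : HQ n G q) (hiJ : i < J)
    (hJσ : 8*J ≤ 2^σ) (hn32 : 32 * Wd σ i ≤ n) :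
    (n:ℝ) / (2:ℝ)^(σ+2) ≤ ((Nd n q σ J i).card : ℝ) := by
  have hdisj : ∀ j1 ∈ Vg n q σ J i, ∀ j2 ∈ Vg n q σ J i, j1 ≠ j2 →
      Disjoint (Icc (ctr q σ i j1 - rad i) (ctr q σ i j1 + rad i))
        (Icc (ctr q σ i j2 - rad i) (ctr q σ i j2 + rad i)) := by
    intro j1 hj1 j2 hj2 hne
    rw [mem_Vg, mem_Ico] at hj1 hj2
    rcases Nat.lt_or_ge j1 j2 with h | h
    · exact balls_disj hHQ hj1.1.2 hj2.1.2 h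
    · exact (balls_disj hHQ hj2.1.2 hj1.1.2 (by omega)).symm
  have hcard : (Nd n q σ J i).card = ∑ j ∈ Vg n q σ J i,
      (Icc (ctr q σ i j - rad i) (ctr q σ i j + rad i)).card := by
    exact Finset.card_biUnion hdisj
  have hval : ∀ j ∈ Vg n q σ J i,
      (Icc (ctr q σ i j - rad i) (ctr q σ i j + rad i)).card = 2 * rad i + 1 := by
    intro j hj
    rw [mem_Vg, mem_Ico] at hj
    exact ball_card hHQ hj.1.1 hj.1.2
  have hcard2 : (Nd n q σ J i).card = (Vg n q σ J i).card * (2 * rad i + 1) := by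
    rw [hcard, Finset.sum_congr rfl hval, Finset.sum_const, smul_eq_mul]
  have hV := Vg_card_real hHQ hiJ hJσ hn32
  have hWR : (0:ℝ) < (Wd σ i : ℝ) := by
    have : 0 < Wd σ i := Nat.pow_pos (by norm_num)
    exact_mod_cast this
  have hradR : (0:ℝ) < (rad i : ℝ) := by
    have : 0 < rad i := Nat.pow_pos (by norm_num)
    exact_mod_cast this
  have hWrad : (Wd σ i : ℝ) = (rad i : ℝ) * (2:ℝ)^(σ+2) := by
    exact_mod_cast @Wd_rad σ i
  have hfin : ((n:ℝ) / (Wd σ i : ℝ) / 2) * (2 * (rad i : ℝ)) = (n:ℝ) / (2:ℝ)^(σ+2) := by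
    rw [hWrad]
    have h2 : (0:ℝ) < (2:ℝ)^(σ+2) := by positivity
    field_simp
  calc (n:ℝ) / (2:ℝ)^(σ+2) = ((n:ℝ) / (Wd σ i : ℝ) / 2) * (2 * (rad i : ℝ)) := hfin.symm
    _ ≤ ((Vg n q σ J i).card : ℝ) * (2 * (rad i : ℝ) + 1) := by
        apply mul_le_mul hV (by linarith) (by positivity) (Nat.cast_nonneg _)
    _ = ((Nd n q σ J i).card : ℝ) := by
        rw [hcard2]
        push_cast
        ring

lemma Nd_subset (hHQ : HQ n G q) : Nd n q σ J i ⊆ range n := by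
  intro x hx
  rw [Nd, mem_biUnion] at hx
  obtain ⟨j, hj, hxj⟩ := hx
  rw [mem_Vg, mem_Ico] at hj
  have := ball_lt_n hHQ hj.1.2
  rw [mem_Icc] at hxj
  rw [mem_range]
  omega

lemma Nd_grad (hHQ : HQ n G q) : ∀ x ∈ Nd n q σ J i, (2:ℝ)^σ/2 ≤ G x := by
  intro x hx
  rw [Nd, mem_biUnion] at hx
  obtain ⟨j, hj, hxj⟩ := hx
  rw [mem_Vg, mem_Ico] at hj
  obtain ⟨h1, h2, h3⟩ := ctr_spec hHQ hj.1.2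
  rw [mem_Icc] at hxj
  have hxn : x < n := by
    have := ball_lt_n hHQ hj.1.2
    omega
  have hg := h3 x (rad i) hxn (by omega) (by omega)
  have hradR : (0:ℝ) < (rad i : ℝ) := by
    have : 0 < rad i := Nat.pow_pos (by norm_num)
    exact_mod_cast this
  have hrad1 : (1:ℝ) ≤ (rad i : ℝ) := by
    have : 1 ≤ rad i := Nat.one_le_two_pow
    exact_mod_cast this
  have hps : ((2:ℕ)^(σ+4*i) : ℝ) = (2:ℝ)^σ * (rad i : ℝ) := by
    exact_mod_cast @pow_sigma_rad σ i
  have hkey : (2:ℝ)^σ/2 ≤ (2:ℝ)^(σ+4*i) / ((rad i : ℝ) + 1) := by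
    have h2σ : (0:ℝ) < (2:ℝ)^σ := by positivity
    rw [div_le_div_iff₀ (by norm_num) (by positivity)]
    have : ((2:ℝ))^(σ+4*i) = (2:ℝ)^σ * (rad i : ℝ) := by
      push_cast at hps
      exact_mod_cast hps
    rw [this]
    nlinarith
  calc (2:ℝ)^σ/2 ≤ (2:ℝ)^(σ+4*i) / ((rad i : ℝ) + 1) := hkey
    _ ≤ G x := by
        have : ((rad i : ℝ) + 1) = (((rad i) + 1 : ℕ) : ℝ) := by push_cast; ring
        rw [this]
        exact_mod_cast hg

lemma aux1 : ∀ t : ℕ, 7 ≤ t → 8 * (2*t+1) ≤ 2^t := by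
  intro t ht
  induction t, ht using Nat.le_induction with
  | base => norm_num
  | succ t ht ih =>
    have : (2:ℕ)^t ≥ 16 := by
      calc (16:ℕ) = 2^4 := by norm_num
      _ ≤ 2^t := Nat.pow_le_pow_right (by norm_num) (by omega)
    rw [pow_succ]
    omega

lemma aux2 (m : ℕ) (hm : 14 ≤ m) : 8 * m ≤ 2 ^ (m / 2) := by
  have h1 : m ≤ 2 * (m/2) + 1 := by omega
  have h2 := aux1 (m/2) (by omega)
  omega

lemma T_sigma (hHQ : HQ n G q) (K1 : ℕ) (hK114 : 14 ≤ K1) (hn : 2^(K1+7) ≤ n)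
    (hσl : K1/2 ≤ σ) (hσu : σ ≤ K1) :
    ∃ T : Finset ℕ, T ⊆ range n ∧ (∀ x ∈ T, (2:ℝ)^σ/2 ≤ G x) ∧
      (((K1-σ)/4 + 1 : ℕ) : ℝ) * ((n:ℝ) / (2:ℝ)^(σ+2)) ≤ (T.card : ℝ) := by
  set J := (K1-σ)/4 + 1 with hJ
  have hJσ : 8*J ≤ 2^σ := by
    have h1 : J ≤ K1 := by omega
    have h2 : 8*K1 ≤ 2^(K1/2) := aux2 K1 hK114
    have h3 : (2:ℕ)^(K1/2) ≤ 2^σ := Nat.pow_le_pow_right (by norm_num) hσl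
    omega
  have h32 : ∀ i', i' < J → 32 * Wd σ i' ≤ n := by
    intro i' hi'
    have h4 : σ + 4*i' ≤ K1 := by omega
    have : Wd σ i' ≤ 2^(K1+2) := by
      unfold Wd
      exact Nat.pow_le_pow_right (by norm_num) (by omega)
    have h5 : (32:ℕ) * 2^(K1+2) = 2^(K1+7) := by
      have : (32:ℕ) = 2^5 := by norm_num
      rw [this, ← pow_add]
      congr 1
      omega
    omega
  refine ⟨(range J).biUnion (fun i' => Nd n q σ J i'), ?_, ?_, ?_⟩
  · intro x hx
    rw [mem_biUnion] at hx
    obtain ⟨i', _, hxi⟩ := hx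
    exact Nd_subset hHQ hxi
  · intro x hx
    rw [mem_biUnion] at hx
    obtain ⟨i', _, hxi⟩ := hx
    exact Nd_grad hHQ x hxi
  · have hcard : ((range J).biUnion (fun i' => Nd n q σ J i')).card
        = ∑ i' ∈ range J, (Nd n q σ J i').card := by
      apply Finset.card_biUnion
      intro i1 hi1 i2 hi2 hne
      rw [Finset.mem_coe, mem_range] at hi1 hi2
      rcases Nat.lt_or_ge i1 i2 with h | h
      · exact Nd_disj hHQ h hi2
      · exact (Nd_disj hHQ (by omega) hi1).symm
    rw [hcard, Nat.cast_sum]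
    calc ((J:ℕ) : ℝ) * ((n:ℝ) / (2:ℝ)^(σ+2))
        = ∑ _i' ∈ range J, ((n:ℝ) / (2:ℝ)^(σ+2)) := by
          rw [Finset.sum_const, nsmul_eq_mul, Finset.card_range]
      _ ≤ ∑ i' ∈ range J, ((Nd n q σ J i').card : ℝ) := by
          apply Finset.sum_le_sum
          intro i' hi'
          rw [mem_range] at hi'
          exact Nd_card hHQ hi' hJσ (h32 i' hi')


set_option maxHeartbeats 1000000 in
lemma core (n : ℕ) (hn : 2 ≤ n) (G : ℕ → ℝ)
    (hone : ∀ x, x < n → 1 ≤ G x)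
    (hcut : ∀ k a, a + 2^k + 2 ≤ n → ∃ p, a < p ∧ p ≤ a + 2^k + 1 ∧
      ∀ x h, x < n → p ≤ x + h → x ≤ p + h → (2:ℝ)^k / (h+1) ≤ G x) :
    Real.log n ^ 2 / 4096 * n ≤ ∑ x ∈ range n, G x := by
  classical
  have hn0 : (0:ℝ) < n := by positivity
  have hn1 : (1:ℝ) ≤ n := by exact_mod_cast (by omega : 1 ≤ n)
  have hlog0 : 0 ≤ Real.log n := Real.log_nonneg hn1
  have hsum1 : (n:ℝ) ≤ ∑ x ∈ range n, G x := by
    calc (n:ℝ) = ∑ _x ∈ range n, (1:ℝ) := by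
          rw [Finset.sum_const, Finset.card_range, nsmul_eq_mul, mul_one]
      _ ≤ ∑ x ∈ range n, G x := by
          apply Finset.sum_le_sum
          intro x hx
          exact hone x (mem_range.mp hx)
  by_cases hsmall : Real.log n ≤ 64
  · have : Real.log n ^ 2 / 4096 ≤ 1 := by nlinarith
    calc Real.log n ^ 2 / 4096 * n ≤ 1 * n := by
          apply mul_le_mul_of_nonneg_right this (le_of_lt hn0)
      _ = (n:ℝ) := one_mul _
      _ ≤ _ := hsum1
  · push_neg at hsmall
    set L := Nat.log 2 n with hLdef
    have hL92 : 92 ≤ L := by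
      by_contra hcon
      push_neg at hcon
      have h1 : n < 2^92 := by
        calc n < 2^(L+1) := Nat.lt_pow_succ_log_self (by norm_num) n
          _ ≤ 2^92 := Nat.pow_le_pow_right (by norm_num) (by omega)
      have h2 : Real.log n < Real.log (2^92) := by
        apply Real.log_lt_log hn0
        exact_mod_cast h1
      rw [Real.log_pow] at h2
      have h3 := Real.log_two_lt_d9
      push_cast at h2
      linarith
    set K1 := L - 7 with hK1def
    have hK114 : 14 ≤ K1 := by omega
    have hnL : 2^(K1+7) ≤ n := by
      have : K1 + 7 = L := by omega
      rw [this, hLdef]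
      exact Nat.pow_log_le_self 2 (by omega)
    -- choose cut points
    have hcut' : ∀ k a, ∃ p, a + 2^k + 2 ≤ n → (a < p ∧ p ≤ a + 2^k + 1 ∧
        ∀ x h, x < n → p ≤ x + h → x ≤ p + h → (2:ℝ)^k / (h+1) ≤ G x) := by
      intro k a
      by_cases h : a + 2^k + 2 ≤ n
      · obtain ⟨p, hp⟩ := hcut k a h
        exact ⟨p, fun _ => hp⟩
      · exact ⟨0, fun h' => absurd h' h⟩
    choose q hq using hcut'
    have hHQ : HQ n G q := fun k a h => hq k a h
    set σ0 := K1/2 with hσ0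
    -- per-σ sets
    have hTσ : ∀ σ, ∃ T : Finset ℕ, σ ∈ Icc σ0 K1 →
        (T ⊆ range n ∧ (∀ x ∈ T, (2:ℝ)^σ/2 ≤ G x) ∧
          (((K1-σ)/4 + 1 : ℕ) : ℝ) * ((n:ℝ) / (2:ℝ)^(σ+2)) ≤ (T.card : ℝ)) := by
      intro σ
      by_cases hσ : σ ∈ Icc σ0 K1
      · rw [mem_Icc] at hσ
        obtain ⟨T, h1, h2, h3⟩ := T_sigma hHQ K1 hK114 hnL hσ.1 hσ.2
        exact ⟨T, fun _ => ⟨h1, h2, h3⟩⟩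
      · exact ⟨∅, fun h => absurd h hσ⟩
    choose T hT using hTσ
    -- layered pointwise bound
    have key : ∀ x ∈ range n,
        ∑ σ ∈ Icc σ0 K1, (if x ∈ T σ then (2:ℝ)^σ/4 else 0) ≤ G x := by
      intro x hx
      rw [mem_range] at hx
      have hGx : 1 ≤ G x := hone x hx
      rw [← Finset.sum_filter]
      set A := (Icc σ0 K1).filter (fun σ => x ∈ T σ) with hA
      rcases A.eq_empty_or_nonempty with hAe | hAne
      · rw [hAe, Finset.sum_empty]
        linarith
      · set M := A.max' hAne with hM
        have hMA : M ∈ A := A.max'_mem hAne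
        have hMI : M ∈ Icc σ0 K1 := (Finset.mem_filter.mp hMA).1
        have hxM : x ∈ T M := (Finset.mem_filter.mp hMA).2
        have hGM : (2:ℝ)^M/2 ≤ G x := (hT M hMI).2.1 x hxM
        have hsub : A ⊆ range (M+1) := by
          intro σ hσ
          rw [mem_range]
          exact Nat.lt_succ_of_le (A.le_max' σ hσ)
        have h1 : ∑ σ ∈ A, (2:ℝ)^σ/4 ≤ ∑ σ ∈ range (M+1), (2:ℝ)^σ/4 := by
          apply Finset.sum_le_sum_of_subset_of_nonneg hsub
          intro σ _ _
          positivity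
        have h2 : ∑ σ ∈ range (M+1), (2:ℝ)^σ/4 = ((2:ℝ)^(M+1) - 1)/4 := by
          rw [← Finset.sum_div]
          congr 1
          have := geom_sum_eq (by norm_num : (2:ℝ) ≠ 1) (M+1)
          rw [this]
          norm_num
        have h3 : ((2:ℝ)^(M+1) - 1)/4 ≤ (2:ℝ)^M/2 := by
          rw [pow_succ]
          nlinarith [pow_pos (by norm_num : (0:ℝ) < 2) M]
        linarith
    -- swap
    have hswap : ∑ σ ∈ Icc σ0 K1, (2:ℝ)^σ/4 * ((T σ).card : ℝ) ≤ ∑ x ∈ range n, G x := by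
      have e1 : ∀ σ ∈ Icc σ0 K1, (2:ℝ)^σ/4 * ((T σ).card : ℝ)
          = ∑ x ∈ range n, (if x ∈ T σ then (2:ℝ)^σ/4 else 0) := by
        intro σ hσ
        rw [Finset.sum_ite_mem]
        rw [Finset.inter_eq_right.mpr ((hT σ hσ).1)]
        rw [Finset.sum_const, nsmul_eq_mul]
        ring
      rw [Finset.sum_congr rfl e1, Finset.sum_comm]
      apply Finset.sum_le_sum key
    -- per σ lower bound
    have hperσ : ∀ σ ∈ Icc σ0 K1,
        (n:ℝ) * ((K1 - σ : ℕ) : ℝ) / 64 ≤ (2:ℝ)^σ/4 * ((T σ).card : ℝ) := by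
      intro σ hσ
      have hJc : ((K1-σ:ℕ):ℝ)/4 ≤ (((K1-σ)/4 + 1 : ℕ) : ℝ) := by
        have : (K1-σ) ≤ 4*((K1-σ)/4 + 1) := by omega
        have hc : ((K1-σ:ℕ):ℝ) ≤ 4*(((K1-σ)/4 + 1 : ℕ):ℝ) := by exact_mod_cast this
        linarith
      have hTc := (hT σ hσ).2.2
      have h2σ : (0:ℝ) < (2:ℝ)^σ := by positivity
      have hps : (2:ℝ)^(σ+2) = (2:ℝ)^σ * 4 := by rw [pow_add]; norm_num
      have hq1 : (2:ℝ)^σ/4 * ((((K1-σ)/4 + 1 : ℕ) : ℝ) * ((n:ℝ) / (2:ℝ)^(σ+2)))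
          = (((K1-σ)/4 + 1 : ℕ) : ℝ) * (n:ℝ) / 16 := by
        rw [hps]
        field_simp
        ring
      calc (n:ℝ) * ((K1 - σ : ℕ) : ℝ) / 64
          = (((K1-σ:ℕ):ℝ)/4) * (n:ℝ) / 16 := by ring
        _ ≤ (((K1-σ)/4 + 1 : ℕ) : ℝ) * (n:ℝ) / 16 := by
            apply div_le_div_of_nonneg_right ?_ (by norm_num)
            apply mul_le_mul_of_nonneg_right hJc (le_of_lt hn0)
        _ = (2:ℝ)^σ/4 * ((((K1-σ)/4 + 1 : ℕ) : ℝ) * ((n:ℝ) / (2:ℝ)^(σ+2))) := hq1.symm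
        _ ≤ (2:ℝ)^σ/4 * ((T σ).card : ℝ) := by
            apply mul_le_mul_of_nonneg_left hTc (by positivity)
    -- sum of (K1 - σ)
    have hgauss : ((K1:ℝ))^2 / 32 ≤ ∑ σ ∈ Icc σ0 K1, ((K1 - σ : ℕ) : ℝ) := by
      set D := K1 - σ0 with hD
      have hDK : K1/4 ≤ D/2 := by omega
      have hsub : Icc σ0 (σ0 + D/2) ⊆ Icc σ0 K1 := by
        apply Finset.Icc_subset_Icc le_rfl
        omega
      have hlow : ∀ σ ∈ Icc σ0 (σ0 + D/2), ((D - D/2 : ℕ) : ℝ) ≤ ((K1 - σ : ℕ) : ℝ) := by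
        intro σ hσ
        rw [mem_Icc] at hσ
        have : (D - D/2 : ℕ) ≤ (K1 - σ : ℕ) := by omega
        exact_mod_cast this
      have h1 : ((Icc σ0 (σ0 + D/2)).card : ℝ) * ((D - D/2 : ℕ) : ℝ)
          ≤ ∑ σ ∈ Icc σ0 (σ0 + D/2), ((K1 - σ : ℕ) : ℝ) := by
        have hh := Finset.card_nsmul_le_sum (Icc σ0 (σ0 + D/2))
          (fun σ => ((K1 - σ : ℕ) : ℝ)) (((D - D/2 : ℕ) : ℝ)) hlow
        rw [nsmul_eq_mul] at hh
        exact hh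
      have h2 : ∑ σ ∈ Icc σ0 (σ0 + D/2), ((K1 - σ : ℕ) : ℝ)
          ≤ ∑ σ ∈ Icc σ0 K1, ((K1 - σ : ℕ) : ℝ) := by
        apply Finset.sum_le_sum_of_subset_of_nonneg hsub
        intro σ _ _
        positivity
      have hcardI : (Icc σ0 (σ0 + D/2)).card = D/2 + 1 := by
        rw [Nat.card_Icc]
        omega
      have h3 : (K1:ℝ)^2/32 ≤ ((D/2 + 1 : ℕ):ℝ) * ((D - D/2 : ℕ) : ℝ) := by
        have e1 : K1 ≤ 4*(D/2) + 4 := by omega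
        have e2 : K1/4 ≤ (D - D/2 : ℕ) := by omega
        have c1 : ((K1:ℕ):ℝ) ≤ 4*((D/2:ℕ):ℝ) + 4 := by exact_mod_cast e1
        have c2 : (((K1/4 : ℕ)):ℝ) ≤ ((D - D/2 : ℕ):ℝ) := by exact_mod_cast e2
        have c3 : ((K1:ℕ):ℝ)/4 - 1 ≤ ((K1/4:ℕ):ℝ) := by
          have : K1 ≤ 4*(K1/4) + 4 := by omega
          have := (by exact_mod_cast this : ((K1:ℕ):ℝ) ≤ 4*((K1/4:ℕ):ℝ) + 4)
          linarith
        have c4 : ((D/2:ℕ):ℝ) ≤ ((D/2 + 1 : ℕ):ℝ) := by exact_mod_cast Nat.le_succ _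
        have hK1R : (39:ℝ) ≤ (K1:ℝ) := by
          have : 39 ≤ K1 := by omega
          exact_mod_cast this
        nlinarith [c1, c2, c3, c4, hK1R]
      rw [hcardI] at h1
      push_cast at h1 h3 ⊢
      linarith
    -- combine
    have htotal : (n:ℝ) * (K1:ℝ)^2 / 2048 ≤ ∑ x ∈ range n, G x := by
      calc (n:ℝ) * (K1:ℝ)^2 / 2048 = (n:ℝ) * ((K1:ℝ)^2/32) / 64 := by ring
        _ ≤ (n:ℝ) * (∑ σ ∈ Icc σ0 K1, ((K1 - σ : ℕ) : ℝ)) / 64 := by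
            apply div_le_div_of_nonneg_right ?_ (by norm_num)
            apply mul_le_mul_of_nonneg_left hgauss (le_of_lt hn0)
        _ = ∑ σ ∈ Icc σ0 K1, (n:ℝ) * ((K1 - σ : ℕ) : ℝ) / 64 := by
            rw [Finset.mul_sum, Finset.sum_div]
        _ ≤ ∑ σ ∈ Icc σ0 K1, (2:ℝ)^σ/4 * ((T σ).card : ℝ) :=
            Finset.sum_le_sum hperσ
        _ ≤ ∑ x ∈ range n, G x := hswap
    -- relate K1 to log n
    have hlogK : Real.log n ≤ 1.41 * (K1:ℝ) := by
      have h1 : (n:ℕ) < 2^(L+1) := Nat.lt_pow_succ_log_self (by norm_num) n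
      have h2 : Real.log n ≤ Real.log (2^(L+1)) := by
        apply Real.log_le_log hn0
        exact_mod_cast Nat.le_of_lt h1
      rw [Real.log_pow] at h2
      have h3 := Real.log_two_lt_d9
      have h4 : ((L+1:ℕ):ℝ) * Real.log 2 ≤ ((L+1:ℕ):ℝ) * 0.6931471808 := by
        apply mul_le_mul_of_nonneg_left (le_of_lt h3) (Nat.cast_nonneg _)
      have h5 : ((L+1:ℕ):ℝ) = (L:ℝ) + 1 := by push_cast; ring
      have h6 : (K1:ℝ) = (L:ℝ) - 7 := by
        have : K1 + 7 = L := by omega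
        have := (by exact_mod_cast this : (K1:ℝ) + 7 = (L:ℝ))
        linarith
      have hL92R : (92:ℝ) ≤ (L:ℝ) := by exact_mod_cast hL92
      nlinarith [h2, h4]
    have hlogsq : Real.log n ^ 2 ≤ 2 * (K1:ℝ)^2 := by
      have hK0 : (0:ℝ) ≤ (K1:ℝ) := Nat.cast_nonneg _
      nlinarith [hlogK, hlog0]
    calc Real.log n ^ 2 / 4096 * n ≤ (2 * (K1:ℝ)^2) / 4096 * n := by
          apply mul_le_mul_of_nonneg_right ?_ (le_of_lt hn0)
          apply div_le_div_of_nonneg_right hlogsq (by norm_num)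
      _ = (n:ℝ) * (K1:ℝ)^2 / 2048 := by ring
      _ ≤ ∑ x ∈ range n, G x := htotal


set_option maxHeartbeats 1000000 in
lemma embed (n : ℕ) (hn : 2 ≤ n) {U : Type} (dU : U → U → ℝ) (f : Fin n → U)
    (hmet : IsMetric dU) (hultra : IsUltrametric dU)
    (hnc : ∀ a b : Fin n, |(a : ℝ) - (b : ℝ)| ≤ dU (f a) (f b)) :
    Real.log n ^ 2 / 4096 * n ≤ ∑ x : Fin n,
      ⨆ y : {y : Fin n // y ≠ x}, dU (f x) (f y.1) / |(x : ℝ) - (y.1 : ℝ)| := by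
  classical
  set Φ : Fin n → ℝ := fun x =>
    ⨆ y : {y : Fin n // y ≠ x}, dU (f x) (f y.1) / |(x : ℝ) - (y.1 : ℝ)| with hΦ
  have hnon : ∀ x : Fin n, Nonempty {y : Fin n // y ≠ x} := by
    intro x
    have : 1 < Fintype.card (Fin n) := by simp; omega
    obtain ⟨y, hy⟩ := Fintype.exists_ne_of_one_lt_card this x
    exact ⟨⟨y, hy⟩⟩
  have hbdd : ∀ x : Fin n, BddAbove (Set.range fun y : {y : Fin n // y ≠ x} =>
      dU (f x) (f y.1) / |(x : ℝ) - (y.1 : ℝ)|) := by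
    intro x
    exact Set.Finite.bddAbove (Set.finite_range _)
  -- key: the sup dominates each quotient
  have hsup : ∀ (x y : Fin n), y ≠ x → dU (f x) (f y) / |(x : ℝ) - (y : ℝ)| ≤ Φ x := by
    intro x y hne
    have := le_ciSup (hbdd x) (⟨y, hne⟩ : {y : Fin n // y ≠ x})
    exact this
  set G : ℕ → ℝ := fun t => if h : t < n then Φ ⟨t, h⟩ else 1 with hG
  have hGval : ∀ (t : ℕ) (h : t < n), G t = Φ ⟨t, h⟩ := by
    intro t h
    simp [hG, h]
  -- generic gradient lower bound
  have hgrad : ∀ (x y : ℕ) (hx : x < n) (hy : y < n) (hne : x ≠ y) (r : ℝ) (h : ℕ),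
      0 < r → r ≤ dU (f ⟨x, hx⟩) (f ⟨y, hy⟩) → y ≤ x + (h+1) → x ≤ y + (h+1) →
      r / (h+1) ≤ G x := by
    intro x y hx hy hne r h hr hd hy1 hy2
    have hne' : (⟨y, hy⟩ : Fin n) ≠ ⟨x, hx⟩ := by
      intro hc
      exact hne (by simpa using (Fin.mk.injEq _ _ _ _ ▸ hc).symm ▸ rfl)
    have habs1 : |((x:ℕ):ℝ) - ((y:ℕ):ℝ)| ≤ (h:ℝ)+1 := by
      rw [abs_le]
      constructor
      · have : (y:ℝ) ≤ (x:ℝ) + ((h:ℝ)+1) := by exact_mod_cast hy1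
        linarith
      · have : (x:ℝ) ≤ (y:ℝ) + ((h:ℝ)+1) := by exact_mod_cast hy2
        linarith
    have habs0 : (1:ℝ) ≤ |((x:ℕ):ℝ) - ((y:ℕ):ℝ)| := by
      rcases Nat.lt_or_ge x y with hlt | hge
      · have hxy : (x:ℝ) + 1 ≤ (y:ℝ) := by exact_mod_cast hlt
        rw [abs_sub_comm, abs_of_nonneg (by linarith : (0:ℝ) ≤ (y:ℝ) - (x:ℝ))]
        linarith
      · have hgt : y < x := by omega
        rw [abs_of_nonneg (by
            have : (y:ℝ) ≤ (x:ℝ) := by exact_mod_cast le_of_lt hgt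
            linarith : (0:ℝ) ≤ (x:ℝ) - (y:ℝ))]
        have : (y:ℝ) + 1 ≤ (x:ℝ) := by exact_mod_cast hgt
        linarith
    have hdiv : r / ((h:ℝ)+1) ≤ dU (f ⟨x, hx⟩) (f ⟨y, hy⟩) / |((x:ℕ):ℝ) - ((y:ℕ):ℝ)| := by
      apply div_le_div₀ (le_trans (le_of_lt hr) hd) hd (by linarith) habs1
    rw [hGval x hx]
    refine le_trans hdiv ?_
    have := hsup ⟨x, hx⟩ ⟨y, hy⟩ hne'
    exact this
  -- hone
  have hone : ∀ x, x < n → 1 ≤ G x := by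
    intro x hx
    rcases Nat.lt_or_ge (x+1) n with hx1 | hx1
    · have hd := hnc ⟨x, hx⟩ ⟨x+1, hx1⟩
      have habs : |((⟨x,hx⟩ : Fin n) : ℝ) - ((⟨x+1,hx1⟩ : Fin n) : ℝ)| = 1 := by
        simp only [Fin.val_mk]
        push_cast
        rw [abs_sub_comm]
        rw [show ((x:ℝ)+1) - (x:ℝ) = 1 by ring]
        exact abs_one
      rw [habs] at hd
      have := hgrad x (x+1) hx hx1 (by omega) 1 0 (by norm_num) hd (by omega) (by omega)
      simpa using this
    · have hx0 : 1 ≤ x := by omega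
      have hxm : x - 1 < n := by omega
      have hd := hnc ⟨x, hx⟩ ⟨x-1, hxm⟩
      have habs : |((⟨x,hx⟩ : Fin n) : ℝ) - ((⟨x-1,hxm⟩ : Fin n) : ℝ)| = 1 := by
        simp only [Fin.val_mk]
        have hc : ((x-1 : ℕ) : ℝ) = (x:ℝ) - 1 := by
          have : (x - 1) + 1 = x := by omega
          have := (by exact_mod_cast congrArg (Nat.cast : ℕ → ℝ) this : ((x-1:ℕ):ℝ) + 1 = (x:ℝ))
          linarith
        rw [hc, show (x:ℝ) - ((x:ℝ) - 1) = 1 by ring]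
        exact abs_one
      rw [habs] at hd
      have := hgrad x (x-1) hx hxm (by omega) 1 0 (by norm_num) hd (by omega) (by omega)
      simpa using this
  -- total extension
  set F : ℕ → U := fun t => if h : t < n then f ⟨t, h⟩ else f ⟨0, by omega⟩ with hF
  have hFval : ∀ (t : ℕ) (h : t < n), F t = f ⟨t, h⟩ := by
    intro t h
    simp [hF, h]
  -- hcut
  have hcut : ∀ k a, a + 2^k + 2 ≤ n → ∃ p, a < p ∧ p ≤ a + 2^k + 1 ∧
      ∀ x h, x < n → p ≤ x + h → x ≤ p + h → (2:ℝ)^k / (h+1) ≤ G x := by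
    intro k a hwin
    have h2k : 1 ≤ 2^k := Nat.one_le_two_pow
    have hrpos : (0:ℝ) < (2:ℝ)^k := by positivity
    have chain : ∀ (m : ℕ), ∀ b, b + m < n →
        (∀ t, t < m → dU (F (b+t)) (F (b+t+1)) ≤ (2:ℝ)^k) →
        dU (F b) (F (b+m)) ≤ (2:ℝ)^k := by
      intro m
      induction m with
      | zero =>
        intro b _ _
        have : dU (F b) (F b) = 0 := (hmet.2.1 _ _).mpr rfl
        rw [Nat.add_zero, this]
        exact le_of_lt hrpos
      | succ m ih =>
        intro b hbm hcons
        have h1 := ih b (by omega) (fun t ht => hcons t (by omega))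
        have h2 := hcons m (by omega)
        have h3 := hultra (F b) (F (b+m+1)) (F (b+m))
        have he : b + (m+1) = b + m + 1 := by ring
        rw [he]
        calc dU (F b) (F (b+m+1))
            ≤ max (dU (F b) (F (b+m))) (dU (F (b+m)) (F (b+m+1))) := h3
          _ ≤ (2:ℝ)^k := max_le h1 h2
    have hnotall : ¬ (∀ t, t < 2^k + 1 → dU (F (a+t)) (F (a+t+1)) ≤ (2:ℝ)^k) := by
      intro hall
      have hc := chain (2^k + 1) a (by omega) hall
      have hb : a + (2^k + 1) < n := by omega
      rw [hFval a (by omega), hFval (a + (2^k+1)) hb] at hc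
      have hd := hnc ⟨a, by omega⟩ ⟨a + (2^k+1), hb⟩
      have habs : |((⟨a, by omega⟩ : Fin n) : ℝ) - ((⟨a + (2^k+1), hb⟩ : Fin n) : ℝ)|
          = (2:ℝ)^k + 1 := by
        simp only [Fin.val_mk]
        rw [abs_sub_comm]
        have h1 : ((a + (2^k+1) : ℕ) : ℝ) = (a:ℝ) + ((2:ℝ)^k + 1) := by push_cast; ring
        rw [h1, show ((a:ℝ) + ((2:ℝ)^k+1)) - (a:ℝ) = (2:ℝ)^k + 1 by ring]
        rw [abs_of_nonneg (by positivity)]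
      rw [habs] at hd
      linarith
    push_neg at hnotall
    obtain ⟨t, ht, hdt⟩ := hnotall
    refine ⟨a + t + 1, by omega, by omega, ?_⟩
    intro x h hx hpx hxp
    -- ultrametric splits
    have hta : a + t < n := by omega
    have hta1 : a + t + 1 < n := by omega
    rw [hFval (a+t) hta, hFval (a+t+1) hta1] at hdt
    have hu := hultra (f ⟨a+t, hta⟩) (f ⟨a+t+1, hta1⟩) (F x)
    rw [hFval x hx] at hu
    have hcase : (2:ℝ)^k < dU (f ⟨x, hx⟩) (f ⟨a+t, hta⟩)
        ∨ (2:ℝ)^k < dU (f ⟨x, hx⟩) (f ⟨a+t+1, hta1⟩) := by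
      rcases lt_max_iff.mp (lt_of_lt_of_le hdt hu) with h1 | h1
      · left
        rw [hmet.2.2.1 (f ⟨x,hx⟩) (f ⟨a+t, hta⟩)]
        exact h1
      · right
        exact h1
    rcases hcase with hc | hc
    · have hne : x ≠ a + t := by
        intro he
        have hfe : (⟨x, hx⟩ : Fin n) = ⟨a+t, hta⟩ := by
          apply Fin.ext
          simpa using he
        have h0 : dU (f ⟨x,hx⟩) (f ⟨a+t, hta⟩) = 0 := (hmet.2.1 _ _).mpr (by rw [hfe])
        rw [h0] at hc
        linarith
      exact hgrad x (a+t) hx hta hne ((2:ℝ)^k) h hrpos (le_of_lt hc) (by omega) (by omega)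
    · have hne : x ≠ a + t + 1 := by
        intro he
        have hfe : (⟨x, hx⟩ : Fin n) = ⟨a+t+1, hta1⟩ := by
          apply Fin.ext
          simpa using he
        have h0 : dU (f ⟨x,hx⟩) (f ⟨a+t+1, hta1⟩) = 0 := (hmet.2.1 _ _).mpr (by rw [hfe])
        rw [h0] at hc
        linarith
      exact hgrad x (a+t+1) hx hta1 hne ((2:ℝ)^k) h hrpos (le_of_lt hc) (by omega) (by omega)
  have hfin := core n hn G hone hcut
  have hsum : ∑ x : Fin n, Φ x = ∑ t ∈ range n, G t := by
    rw [← Fin.sum_univ_eq_sum_range (fun t => G t) n]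
    apply Finset.sum_congr rfl
    intro x _
    rw [hGval x.val x.isLt]
  calc Real.log n ^ 2 / 4096 * n ≤ ∑ t ∈ range n, G t := hfin
    _ = ∑ x : Fin n, Φ x := hsum.symm



end PathUltra


/-- There is a universal `c > 0` such that for every `n ≥ 2` and every finitely supported
distribution over non-contractive embeddings of the path `{0,…,n−1}` (with metric
`|i−j|`) into finite ultrametric spaces, some point has expected maximum gradient at
least `c (log n)²`. -/
theorem path_ultrametric_max_gradient_lower_bound :
    ∃ c : ℝ, 0 < c ∧
      ∀ (n : ℕ), 2 ≤ n →
        ∀ (m : ℕ) (w : Fin m → ℝ) (U : Fin m → Type)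
          (dU : ∀ i, U i → U i → ℝ) (f : ∀ i, Fin n → U i),
          (∀ i, 0 ≤ w i) → (∑ i, w i = 1) →
          (∀ i, w i ≠ 0 →
            Finite (U i) ∧ IsMetric (dU i) ∧ IsUltrametric (dU i) ∧
            ∀ a b : Fin n, |(a : ℝ) - (b : ℝ)| ≤ dU i (f i a) (f i b)) →
          ∃ x : Fin n,
            c * (Real.log n) ^ 2 ≤
              ∑ i, w i * (⨆ y : {y : Fin n // y ≠ x},
                dU i (f i x) (f i y.1) / |(x : ℝ) - (y.1 : ℝ)|) := by
  refine ⟨1/4096, by norm_num, ?_⟩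
  intro n hn m w U dU f hw hsum1 hprop
  by_contra hcon
  push_neg at hcon
  set Φ : Fin m → Fin n → ℝ := fun i x =>
    ⨆ y : {y : Fin n // y ≠ x}, dU i (f i x) (f i y.1) / |(x : ℝ) - (y.1 : ℝ)| with hΦ
  have hkey : ∀ i : Fin m, w i * (Real.log n ^ 2 / 4096 * n) ≤ w i * ∑ x : Fin n, Φ i x := by
    intro i
    by_cases h : w i = 0
    · rw [h, zero_mul, zero_mul]
    · obtain ⟨_, hmet, hultra, hnc⟩ := hprop i h
      have := PathUltra.embed n hn (dU i) (f i) hmet hultra hnc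
      exact mul_le_mul_of_nonneg_left this (hw i)
  have h1 : Real.log n ^ 2 / 4096 * n = ∑ i : Fin m, w i * (Real.log n ^ 2 / 4096 * n) := by
    rw [← Finset.sum_mul, hsum1, one_mul]
  have h2 : ∑ i : Fin m, w i * ∑ x : Fin n, Φ i x
      = ∑ x : Fin n, ∑ i : Fin m, w i * Φ i x := by
    rw [← Finset.sum_comm]
    apply Finset.sum_congr rfl
    intro i _
    rw [Finset.mul_sum]
  have hne : (Finset.univ : Finset (Fin n)).Nonempty := ⟨⟨0, by omega⟩, mem_univ _⟩
  have h3 : ∑ x : Fin n, ∑ i : Fin m, w i * Φ i x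
      < ∑ _x : Fin n, (1/4096 * Real.log n ^ 2) := by
    apply Finset.sum_lt_sum_of_nonempty hne
    intro x _
    exact hcon x
  have h4 : ∑ _x : Fin n, (1/4096 * Real.log n ^ 2 : ℝ)
      = Real.log n ^ 2 / 4096 * n := by
    rw [Finset.sum_const, Finset.card_univ, Fintype.card_fin, nsmul_eq_mul]
    ring
  have h5 : Real.log n ^ 2 / 4096 * n < Real.log n ^ 2 / 4096 * n := by
    calc Real.log n ^ 2 / 4096 * n = ∑ i : Fin m, w i * (Real.log n ^ 2 / 4096 * n) := h1
      _ ≤ ∑ i : Fin m, w i * ∑ x : Fin n, Φ i x := Finset.sum_le_sum (fun i _ => hkey i)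
      _ = ∑ x : Fin n, ∑ i : Fin m, w i * Φ i x := h2
      _ < ∑ _x : Fin n, (1/4096 * Real.log n ^ 2) := h3
      _ = Real.log n ^ 2 / 4096 * n := h4
  exact lt_irrefl _ h5
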